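/- In a C-loop C in which every square is central, the following are equivalent: (i) C is flexible (x·(yx) = (xy)·x for all x,y); (ii) (xy)² = (yx)² for all x,y ∈ C; (iii) the map x ↦ x³ is an antiautomorphism of C (i.e., (xy)³ = y³x³ for all x,y). -/
import Mathlib


/-- A loop: a magma with two-sided identity and bijective left/right translations. -/
class MulLoop (L : Type*) extends Mul L, One L where
  one_mul : ∀ x : L, 1 * x = x
  mul_one : ∀ x : L, x * 1 = x
  mulLeft_bijective : ∀ a : L, Function.Bijective fun x : L => a * x
  mulRight_bijective : ∀ a : L, Function.Bijective fun x : L => x * a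

/-- A C-loop: a loop satisfying `x(y·yz) = (xy·y)z`; C-loops are inverse property
loops, so we include the two-sided inverse. -/
class CLoop (L : Type*) extends MulLoop L, Inv L where
  mul_inv : ∀ x : L, x * x⁻¹ = 1
  inv_mul : ∀ x : L, x⁻¹ * x = 1
  c_law : ∀ x y z : L, x * (y * (y * z)) = ((x * y) * y) * z

/-- A Steiner loop: a commutative inverse property loop of exponent 2. -/
class SteinerLoop (L : Type*) extends MulLoop L where
  comm : ∀ x y : L, x * y = y * x
  sq : ∀ x : L, x * x = 1
  cancel : ∀ x y : L, x * (x * y) = y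

/-- The nucleus: elements associating with all pairs in all three positions. -/
def nucleus (L : Type*) [Mul L] : Set L :=
  {a | ∀ x y : L, a * x * y = a * (x * y) ∧ x * a * y = x * (a * y) ∧
        x * y * a = x * (y * a)}

/-- The center: nuclear elements commuting with everything. -/
def loopCenter (L : Type*) [Mul L] : Set L :=
  {a ∈ nucleus L | ∀ x : L, a * x = x * a}

namespace CLP

variable {C : Type} [CLoop C]

lemma lcan (a : C) {u v : C} (h : a * u = a * v) : u = v :=
  (MulLoop.mulLeft_bijective a).1 h

lemma rcan (a : C) {u v : C} (h : u * a = v * a) : u = v :=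
  (MulLoop.mulRight_bijective a).1 h

/-- left "LC": x(xz) = (xx)z -/
lemma LCl (x z : C) : x * (x * z) = (x * x) * z := by
  have h := CLoop.c_law (1 : C) x z
  rwa [MulLoop.one_mul, MulLoop.one_mul] at h

lemma milft (x w : C) : x * (x⁻¹ * w) = w := by
  obtain ⟨z, hz⟩ := (MulLoop.mulLeft_bijective (x⁻¹ : C)).2 w
  have hz' : x⁻¹ * z = w := hz
  have h := CLoop.c_law x x⁻¹ z
  rw [CLoop.mul_inv, MulLoop.one_mul] at h
  rw [← hz']
  exact h

lemma invinv (x : C) : x⁻¹⁻¹ = x :=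
  lcan x⁻¹ (by rw [CLoop.mul_inv, CLoop.inv_mul])

lemma imlft (x w : C) : x⁻¹ * (x * w) = w := by
  have h := milft x⁻¹ w
  rwa [invinv] at h

lemma mirgt (u y : C) : (u * y⁻¹) * y = u := by
  obtain ⟨x, hx⟩ := (MulLoop.mulRight_bijective (y⁻¹ : C)).2 u
  have hx' : x * y⁻¹ = u := hx
  have h := CLoop.c_law x y⁻¹ y
  rw [CLoop.inv_mul, MulLoop.mul_one] at h
  rw [hx'] at h
  exact h.symm

lemma imrgt (u y : C) : (u * y) * y⁻¹ = u := by
  have h := mirgt u y⁻¹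
  rwa [invinv] at h

lemma minvrev (x y : C) : (x * y)⁻¹ = y⁻¹ * x⁻¹ := by
  have h1 : (x * y)⁻¹ * x = y⁻¹ := by
    have h := imlft (x * y) y⁻¹
    rwa [imrgt] at h
  have h2 := imrgt ((x * y)⁻¹) x
  rw [h1] at h2
  exact h2.symm

lemma nl {a : C} (ha : a ∈ loopCenter C) (x y : C) : (a * x) * y = a * (x * y) :=
  (ha.1 x y).1

lemma nm {a : C} (ha : a ∈ loopCenter C) (x y : C) : (x * a) * y = x * (a * y) :=
  (ha.1 x y).2.1

lemma nr {a : C} (ha : a ∈ loopCenter C) (x y : C) : (x * y) * a = x * (y * a) :=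
  (ha.1 x y).2.2

lemma cm {a : C} (ha : a ∈ loopCenter C) (x : C) : a * x = x * a := ha.2 x

lemma pull {a : C} (ha : a ∈ loopCenter C) (x y : C) : x * (a * y) = a * (x * y) := by
  rw [← nm ha x y, ← cm ha x, nl ha x y]

lemma K (hsq : ∀ x : C, x * x ∈ loopCenter C) (x y : C) :
    (y * x) * ((x * y) * (x * y)) = (x * y) * ((x * x) * (y * y)) := by
  have hs := hsq x
  have hA := hsq (x * y)
  have hu := hsq y⁻¹
  have hv := hsq x⁻¹
  have e1 : x⁻¹ = (x⁻¹ * x⁻¹) * x := by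
    have h := LCl x⁻¹ x
    rwa [CLoop.inv_mul, MulLoop.mul_one] at h
  have e2 : y⁻¹ = (y⁻¹ * y⁻¹) * y := by
    have h := LCl y⁻¹ y
    rwa [CLoop.inv_mul, MulLoop.mul_one] at h
  apply lcan (x⁻¹ * y⁻¹)
  have hML : (x⁻¹ * y⁻¹) * ((y * x) * ((x * y) * (x * y))) = (x * y) * (x * y) := by
    rw [← minvrev y x]
    exact imlft (y * x) _
  rw [hML]
  symm
  -- goal: (x⁻¹*y⁻¹) * ((x*y)*((x*x)*(y*y))) = (x*y)*(x*y)
  conv_lhs => rw [e1, e2]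
  rw [nl hv x ((y⁻¹ * y⁻¹) * y)]
  rw [pull hu x y]
  rw [nl hv ((y⁻¹ * y⁻¹) * (x * y)) ((x * y) * ((x * x) * (y * y)))]
  rw [nl hu (x * y) ((x * y) * ((x * x) * (y * y)))]
  rw [LCl (x * y) ((x * x) * (y * y))]
  rw [pull hA (y⁻¹ * y⁻¹) ((x * x) * (y * y))]
  rw [pull hs (y⁻¹ * y⁻¹) (y * y)]
  rw [← LCl y⁻¹ (y * y), imlft y y, CLoop.inv_mul y, MulLoop.mul_one (x * x)]
  rw [pull hA (x⁻¹ * x⁻¹) (x * x)]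
  rw [← LCl x⁻¹ (x * x), imlft x x, CLoop.inv_mul x, MulLoop.mul_one]

lemma A1 (hsq : ∀ x : C, x * x ∈ loopCenter C) (x y : C) :
    (x * (y * x)) * ((x * y) * (x * y)) = ((x * x) * (x * x)) * (y * (y * y)) := by
  have hs := hsq x
  have ht := hsq y
  have hA := hsq (x * y)
  rw [nr hA x (y * x)]
  rw [K hsq x y]
  rw [pull hs (x * y) (y * y)]
  rw [pull hs x ((x * y) * (y * y))]
  rw [nr ht x y]
  rw [LCl x (y * (y * y))]
  rw [LCl (x * x) (y * (y * y))]

lemma A2 (hsq : ∀ x : C, x * x ∈ loopCenter C) (x y : C) :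
    ((x * y) * x) * (((x * x) * (x * x)) * (y * y)) =
      ((x * x) * (x * x)) * (y * ((x * y) * (x * y))) := by
  have hs := hsq x
  have h := K hsq x (x * y)
  rw [LCl x y] at h
  -- h : ((x*y)*x) * (((x*x)*y)*((x*x)*y)) = ((x*x)*y) * ((x*x)*((x*y)*(x*y)))
  rw [nl hs y ((x * x) * y)] at h
  rw [pull hs y y] at h
  rw [LCl (x * x) (y * y)] at h
  rw [nl hs y ((x * x) * ((x * y) * (x * y)))] at h
  rw [pull hs y ((x * y) * (x * y))] at h
  rw [LCl (x * x) (y * ((x * y) * (x * y)))] at h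
  exact h

lemma flex_iff (hsq : ∀ x : C, x * x ∈ loopCenter C) (x y : C) :
    (x * (y * x) = (x * y) * x) ↔
      (((x * y) * (x * y)) * ((x * y) * (x * y)) =
        ((x * x) * (x * x)) * ((y * y) * (y * y))) := by
  have hs := hsq x
  have ht := hsq y
  have hA := hsq (x * y)
  have hss := hsq (x * x)
  have E1 : ((x * (y * x)) * ((x * y) * (x * y))) * (((x * x) * (x * x)) * (y * y)) =
      ((x * x) * (x * x)) * (((x * x) * (x * x)) * (y * ((y * y) * (y * y)))) := by
    rw [A1 hsq x y]
    rw [nl hss (y * (y * y)) (((x * x) * (x * x)) * (y * y))]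
    rw [pull hss (y * (y * y)) (y * y)]
    rw [nr ht y (y * y)]
  have E2 : (((x * y) * x) * ((x * y) * (x * y))) * (((x * x) * (x * x)) * (y * y)) =
      ((x * x) * (x * x)) * (y * (((x * y) * (x * y)) * ((x * y) * (x * y)))) := by
    rw [nm hA ((x * y) * x) (((x * x) * (x * x)) * (y * y))]
    rw [cm hA (((x * x) * (x * x)) * (y * y))]
    rw [← nr hA ((x * y) * x) (((x * x) * (x * x)) * (y * y))]
    rw [A2 hsq x y]
    rw [nl hss (y * ((x * y) * (x * y))) ((x * y) * (x * y))]
    rw [nr hA y ((x * y) * (x * y))]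
  constructor
  · intro h
    have h2 : ((x * (y * x)) * ((x * y) * (x * y))) * (((x * x) * (x * x)) * (y * y)) =
        (((x * y) * x) * ((x * y) * (x * y))) * (((x * x) * (x * x)) * (y * y)) := by
      rw [h]
    rw [E1, E2] at h2
    have h3 := lcan ((x * x) * (x * x)) h2
    rw [← pull hss y ((y * y) * (y * y))] at h3
    exact (lcan y h3).symm
  · intro h
    apply rcan ((x * y) * (x * y))
    apply rcan (((x * x) * (x * x)) * (y * y))
    rw [E1, E2, h]
    rw [pull hss y ((y * y) * (y * y))]

lemma sq_iff (hsq : ∀ x : C, x * x ∈ loopCenter C) (x y : C) :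
    ((x * y) * (x * y) = (y * x) * (y * x)) ↔
      (((x * y) * (x * y)) * ((x * y) * (x * y)) =
        ((x * x) * (x * x)) * ((y * y) * (y * y))) := by
  have hs := hsq x
  have ht := hsq y
  have hA := hsq (x * y)
  have hAA := hsq ((x * y) * (x * y))
  have hss := hsq (x * x)
  have hK := K hsq x y
  have m1 : ((y * x) * ((x * y) * (x * y))) * ((y * x) * ((x * y) * (x * y))) =
      (((x * y) * (x * y)) * ((x * y) * (x * y))) * ((y * x) * (y * x)) := by
    rw [nm hA (y * x) ((y * x) * ((x * y) * (x * y)))]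
    rw [← cm hA (y * x)]
    rw [LCl ((x * y) * (x * y)) (y * x)]
    rw [pull hAA (y * x) (y * x)]
  have m2 : ((x * y) * ((x * x) * (y * y))) * ((x * y) * ((x * x) * (y * y))) =
      ((x * x) * (x * x)) * (((y * y) * (y * y)) * ((x * y) * (x * y))) := by
    rw [pull hs (x * y) (y * y)]
    rw [← cm ht (x * y)]
    rw [nl hs ((y * y) * (x * y)) ((x * x) * ((y * y) * (x * y)))]
    rw [pull hs ((y * y) * (x * y)) ((y * y) * (x * y))]
    rw [nl ht (x * y) ((y * y) * (x * y))]
    rw [pull ht (x * y) (x * y)]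
    rw [LCl (y * y) ((x * y) * (x * y))]
    rw [LCl (x * x) (((y * y) * (y * y)) * ((x * y) * (x * y)))]
  have S1 : (((x * y) * (x * y)) * ((x * y) * (x * y))) * ((y * x) * (y * x)) =
      ((x * x) * (x * x)) * (((y * y) * (y * y)) * ((x * y) * (x * y))) := by
    rw [← m1, hK]
    exact m2
  constructor
  · intro h
    have h1 := S1
    rw [← h] at h1
    apply rcan ((x * y) * (x * y))
    rw [h1, nl hss ((y * y) * (y * y)) ((x * y) * (x * y))]
  · intro h
    apply lcan (((x * y) * (x * y)) * ((x * y) * (x * y)))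
    rw [S1, h, nl hss ((y * y) * (y * y)) ((x * y) * (x * y))]

lemma cube_iff (hsq : ∀ x : C, x * x ∈ loopCenter C) (x y : C) :
    (((x * y) * (x * y)) * (x * y) = ((y * y) * y) * ((x * x) * x)) ↔
      (((x * y) * (x * y)) * ((x * y) * (x * y)) =
        ((x * x) * (x * x)) * ((y * y) * (y * y))) := by
  have hs := hsq x
  have ht := hsq y
  have hA := hsq (x * y)
  have hss := hsq (x * x)
  have hK := K hsq x y
  have C1 : (((x * y) * (x * y)) * (x * y)) * ((x * y) * (x * y)) =
      (((x * y) * (x * y)) * ((x * y) * (x * y))) * (x * y) := by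
    rw [nr hA ((x * y) * (x * y)) (x * y)]
    rw [← cm hA (x * y)]
    rw [LCl ((x * y) * (x * y)) (x * y)]
  have C2 : (((y * y) * y) * ((x * x) * x)) * ((x * y) * (x * y)) =
      (((x * x) * (x * x)) * ((y * y) * (y * y))) * (x * y) := by
    rw [nl ht y ((x * x) * x)]
    rw [pull hs y x]
    rw [pull hs (y * y) (y * x)]
    rw [nl hs ((y * y) * (y * x)) ((x * y) * (x * y))]
    rw [nl ht (y * x) ((x * y) * (x * y))]
    rw [hK]
    rw [pull hs (x * y) (y * y)]
    rw [← cm ht (x * y)]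
    rw [pull hs (y * y) ((y * y) * (x * y))]
    rw [LCl (y * y) (x * y)]
    rw [LCl (x * x) (((y * y) * (y * y)) * (x * y))]
    rw [nl hss ((y * y) * (y * y)) (x * y)]
  constructor
  · intro h
    apply rcan (x * y)
    rw [← C1, ← C2, h]
  · intro h
    apply rcan ((x * y) * (x * y))
    rw [C1, C2, h]

end CLP

/-- In a C-loop with central squares, flexibility, the identity `(xy)² = (yx)²`,
and `x ↦ x³` being an antiautomorphism are all equivalent. -/
theorem stmt9 {C : Type} [CLoop C]
    (hsq : ∀ x : C, x * x ∈ loopCenter C) :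
    ((∀ x y : C, x * (y * x) = (x * y) * x) ↔
      (∀ x y : C, (x * y) * (x * y) = (y * x) * (y * x))) ∧
    ((∀ x y : C, x * (y * x) = (x * y) * x) ↔
      (∀ x y : C, ((x * y) * (x * y)) * (x * y) = ((y * y) * y) * ((x * x) * x))) := by
  refine ⟨⟨fun h x y => (CLP.sq_iff hsq x y).mpr ((CLP.flex_iff hsq x y).mp (h x y)),
          fun h x y => (CLP.flex_iff hsq x y).mpr ((CLP.sq_iff hsq x y).mp (h x y))⟩,
         ⟨fun h x y => (CLP.cube_iff hsq x y).mpr ((CLP.flex_iff hsq x y).mp (h x y)),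
          fun h x y => (CLP.flex_iff hsq x y).mpr ((CLP.cube_iff hsq x y).mp (h x y))⟩⟩
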